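/- Let B be an integral domain containing a field k of characteristic zero, and let D be a nonzero locally nilpotent k-derivation on B (i.e., for every b ∈ B there exists n with D^n(b) = 0). Then the kernel A = ker(D) is factorially closed in B: if a, b ∈ B are nonzero and a·b ∈ A, then a ∈ A and b ∈ A. -/
import Mathlib

open Finset in
lemma iter_leibniz {k B : Type*} [CommRing k] [CommRing B] [Algebra k B]
    (D : Derivation k B B) (a b : B) (n : ℕ) :
    (⇑D)^[n] (a * b) =
      ∑ i ∈ range (n + 1), n.choose i • ((⇑D)^[i] a * (⇑D)^[n - i] b) := by
  induction n with
  | zero => simp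
  | succ n ih =>
    rw [Function.iterate_succ_apply', ih, map_sum]
    have hterm : ∀ i ∈ range (n + 1),
        D (n.choose i • ((⇑D)^[i] a * (⇑D)^[n - i] b)) =
          n.choose i • ((⇑D)^[i + 1] a * (⇑D)^[n - i] b)
          + n.choose i • ((⇑D)^[i] a * (⇑D)^[n - i + 1] b) := by
      intro i hi
      rw [map_nsmul, Derivation.leibniz, smul_eq_mul, smul_eq_mul, smul_add,
        Function.iterate_succ_apply', Function.iterate_succ_apply']
      ring_nf
    rw [sum_congr rfl hterm, sum_add_distrib]
    have h1 : ∑ i ∈ range (n + 1), n.choose i • ((⇑D)^[i] a * (⇑D)^[n - i + 1] b)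
        = ∑ i ∈ range (n + 1), n.choose i • ((⇑D)^[i] a * (⇑D)^[n + 1 - i] b) := by
      refine sum_congr rfl fun i hi => ?_
      rw [mem_range] at hi
      have : n - i + 1 = n + 1 - i := by omega
      rw [this]
    rw [h1]
    -- now do the Pascal recombination
    rw [sum_range_succ' (fun i => (n+1).choose i • ((⇑D)^[i] a * (⇑D)^[n + 1 - i] b)) (n+1)]
    have h2 : ∀ i ∈ range (n + 1),
        (n+1).choose (i+1) • ((⇑D)^[i+1] a * (⇑D)^[n + 1 - (i+1)] b)
        = n.choose i • ((⇑D)^[i+1] a * (⇑D)^[n - i] b)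
          + n.choose (i+1) • ((⇑D)^[i+1] a * (⇑D)^[n - i] b) := by
      intro i hi
      have : n + 1 - (i + 1) = n - i := by omega
      rw [this, Nat.choose_succ_succ, add_smul]
    rw [sum_congr rfl h2, sum_add_distrib]
    have h3 : ∑ i ∈ range (n + 1), n.choose (i+1) • ((⇑D)^[i+1] a * (⇑D)^[n - i] b)
        = ∑ i ∈ range (n + 1), n.choose i • ((⇑D)^[i] a * (⇑D)^[n + 1 - i] b)
          - n.choose 0 • ((⇑D)^[0] a * (⇑D)^[n + 1] b) := by
    -- RHS sum = ∑_{range n} choose(i+1) • f(i+1, n-i) + choose 0 • f 0 (n+1)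
      rw [sum_range_succ' (fun i => n.choose i • ((⇑D)^[i] a * (⇑D)^[n + 1 - i] b)) n]
      have h4 : ∀ i ∈ range n, n.choose (i+1) • ((⇑D)^[i+1] a * (⇑D)^[n + 1 - (i+1)] b)
          = n.choose (i+1) • ((⇑D)^[i+1] a * (⇑D)^[n - i] b) := by
        intro i hi; congr 3; omega
      rw [sum_congr rfl h4]
      rw [sum_range_succ (fun i => n.choose (i+1) • ((⇑D)^[i+1] a * (⇑D)^[n - i] b)) n]
      simp
    rw [h3]
    simp
    abel

lemma iter_zero {k B : Type*} [CommRing k] [CommRing B] [Algebra k B]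
    (D : Derivation k B B) (j : ℕ) : (⇑D)^[j] 0 = 0 :=
  Function.iterate_fixed (map_zero D) j

lemma iter_stable {k B : Type*} [CommRing k] [CommRing B] [Algebra k B]
    (D : Derivation k B B) (x : B) (m j : ℕ) (h : (⇑D)^[m] x = 0) (hj : m ≤ j) :
    (⇑D)^[j] x = 0 := by
  obtain ⟨c, rfl⟩ := Nat.exists_eq_add_of_le hj
  rw [add_comm, Function.iterate_add_apply, h, iter_zero]

/-- A derivation is locally nilpotent if every element is killed by some iterate. -/
def IsLND {k B : Type*} [CommRing k] [CommRing B] [Algebra k B]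
    (D : Derivation k B B) : Prop :=
  ∀ b : B, ∃ n : ℕ, (⇑D)^[n] b = 0

/-- `ndeg D b n` says that `n` is the `D`-degree of `b`, i.e. the largest `m` with
`D^[m] b ≠ 0`. -/
def ndeg {k B : Type*} [CommRing k] [CommRing B] [Algebra k B]
    (D : Derivation k B B) (b : B) (n : ℕ) : Prop :=
  (⇑D)^[n] b ≠ 0 ∧ (⇑D)^[n + 1] b = 0

/-- A derivation is irreducible if the ideal generated by its image is not contained
in any proper principal ideal. -/
def IsIrred {k B : Type*} [CommRing k] [CommRing B] [Algebra k B]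
    (D : Derivation k B B) : Prop :=
  ∀ b : B, Ideal.span (Set.range (⇑D)) ≤ Ideal.span {b} → IsUnit b

lemma deg_exists {k B : Type*} [CommRing k] [CommRing B] [Algebra k B]
    (D : Derivation k B B) (hlnd : IsLND D) (x : B) (hx : x ≠ 0) :
    ∃ m : ℕ, ndeg D x m := by
  have h := hlnd x
  classical
  let N := Nat.find h
  have hN : (⇑D)^[N] x = 0 := Nat.find_spec h
  have hNne : N ≠ 0 := by
    intro h0
    rw [h0] at hN
    exact hx hN
  refine ⟨N - 1, ?_, ?_⟩
  · exact Nat.find_min h (by omega)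
  · have : N - 1 + 1 = N := by omega
    rw [this]; exact hN

/-- The kernel of a nonzero locally nilpotent derivation on a domain is factorially
closed: if `a * b` lies in the kernel with `a, b ≠ 0`, then both `a` and `b` do. -/
theorem kernel_factorially_closed {k B : Type*} [Field k] [CharZero k]
    [CommRing B] [IsDomain B] [Algebra k B]
    (D : Derivation k B B) (hD : D ≠ 0) (hlnd : IsLND D)
    (a b : B) (ha : a ≠ 0) (hb : b ≠ 0) (hab : D (a * b) = 0) :
    D a = 0 ∧ D b = 0 := by
  haveI : CharZero B := charZero_of_injective_algebraMap (algebraMap k B).injective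
  obtain ⟨m, hma, hma'⟩ := deg_exists D hlnd a ha
  obtain ⟨n, hnb, hnb'⟩ := deg_exists D hlnd b hb
  have key : (⇑D)^[m + n] (a * b)
      = (m + n).choose m • ((⇑D)^[m] a * (⇑D)^[n] b) := by
    rw [iter_leibniz]
    rw [Finset.sum_eq_single m]
    · have : m + n - m = n := by omega
      rw [this]
    · intro i hi hne
      rw [Finset.mem_range] at hi
      rcases lt_or_gt_of_ne hne with h | h
      · have : (⇑D)^[m + n - i] b = 0 := iter_stable D b (n+1) _ hnb' (by omega)
        rw [this, mul_zero, smul_zero]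
      · have : (⇑D)^[i] a = 0 := iter_stable D a (m+1) _ hma' (by omega)
        rw [this, zero_mul, smul_zero]
    · intro h
      exact absurd (Finset.mem_range.mpr (by omega)) h
  have hkey_ne : (⇑D)^[m + n] (a * b) ≠ 0 := by
    rw [key, nsmul_eq_mul]
    exact mul_ne_zero (Nat.cast_ne_zero.mpr (Nat.choose_pos (Nat.le_add_right m n)).ne')
      (mul_ne_zero hma hnb)
  have hmn : m + n = 0 := by
    by_contra h
    apply hkey_ne
    have : (⇑D)^[1] (a * b) = 0 := by rwa [Function.iterate_one]
    exact iter_stable D (a * b) 1 (m + n) this (by omega)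
  have hm : m = 0 := by omega
  have hn : n = 0 := by omega
  constructor
  · rw [hm] at hma'; simpa using hma'
  · rw [hn] at hnb'; simpa using hnb'
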